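/- For every Motzkin path p of length n, the number of permutations w of {1,…,n} with φ(w) = p equals wt(p) = ∏_{i : p_i ∈ {U,D}} h_i · ∏_{i : p_i = H} (2h_i + 1). -/

import Mathlib

/-- The three kinds of steps of a Motzkin path. -/
inductive Step : Type
  | U : Step
  | D : Step
  | H : Step
deriving DecidableEq
instance instFintypeStep : Fintype Step where
  elems := {Step.U, Step.D, Step.H}
  complete := fun x => by cases x <;> simp
/-- Number of indices `i` with `i < m` (i.e. in the prefix of length `m`,
with 0-based indexing) at which the word `p` has the letter `s`. -/
def countIn {n : ℕ} (p : Fin n → Step) (s : Step) (m : ℕ) : ℕ :=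
  (Finset.univ.filter (fun i : Fin n => (i : ℕ) < m ∧ p i = s)).card
/-- A word `p` of length `n` over `{U, D, H}` is a Motzkin path if every
prefix contains at least as many `U`'s as `D`'s and the whole word contains
equally many `U`'s and `D`'s. -/
def IsMotzkin {n : ℕ} (p : Fin n → Step) : Prop :=
  (∀ m ≤ n, countIn p Step.D m ≤ countIn p Step.U m) ∧
  countIn p Step.U n = countIn p Step.D n
/-- The map `φ` from permutations of `{1,…,n}` to words over `{U,D,H}`:
`p_i = U` if `w⁻¹(i) > i < w(i)`, `p_i = D` if `w⁻¹(i) < i > w(i)`,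
and `p_i = H` otherwise. -/
def phi {n : ℕ} (w : Equiv.Perm (Fin n)) : Fin n → Step := fun i =>
  if i < w.symm i ∧ i < w i then Step.U
  else if w.symm i < i ∧ w i < i then Step.D
  else Step.H
/-- The height `h_i` of step `i`: the number of `j ≤ i` with `p_j = U` minus
the number of `j ≤ i` with `p_j = D`, increased by `1` when `p_i = D`. -/
def heightAt {n : ℕ} (p : Fin n → Step) (i : Fin n) : ℕ :=
  ((Finset.univ.filter (fun j : Fin n => j ≤ i ∧ p j = Step.U)).card
    - (Finset.univ.filter (fun j : Fin n => j ≤ i ∧ p j = Step.D)).card)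
    + (if p i = Step.D then 1 else 0)
/-- The weight of a Motzkin path: the product over all steps of `h_i` for
`U` and `D` steps and of `2h_i + 1` for `H` steps. -/
def wt {n : ℕ} (p : Fin n → Step) : ℕ :=
  ∏ i : Fin n, (if p i = Step.H then 2 * heightAt p i + 1 else heightAt p i)
open Finset

/-- Refined step types. -/
inductive RT : Type
  | UU | DD | HO | HI | FF
deriving DecidableEq
instance instFintypeRT : Fintype RT where
  elems := {RT.UU, RT.DD, RT.HO, RT.HI, RT.FF}
  complete := fun x => by cases x <;> simp

def rtToStep : RT → Step
  | RT.UU => Step.U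
  | RT.DD => Step.D
  | _ => Step.H

/-- Refined type of a permutation at a position. -/
def refType {n : ℕ} (w : Equiv.Perm (Fin n)) : Fin n → RT := fun i =>
  if i < w i ∧ i < w.symm i then RT.UU
  else if w i < i ∧ w.symm i < i then RT.DD
  else if i < w i then RT.HO
  else if w i < i then RT.HI
  else RT.FF

lemma fix_iff {n : ℕ} (w : Equiv.Perm (Fin n)) (i : Fin n) :
    ((w i : ℕ) = i) ↔ ((w.symm i : ℕ) = i) := by
  rw [Fin.val_eq_val, Fin.val_eq_val]
  constructor
  · intro h; conv_lhs => rw [← h]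
    rw [Equiv.symm_apply_apply]
  · intro h; conv_lhs => rw [← h]
    rw [Equiv.apply_symm_apply]

lemma phi_eq_rt {n : ℕ} (w : Equiv.Perm (Fin n)) :
    phi w = fun i => rtToStep (refType w i) := by
  funext i
  have hf := fix_iff w i
  simp only [phi, refType, Fin.lt_def]
  split_ifs <;> simp [rtToStep] <;> omega

lemma refType_X {n : ℕ} (w : Equiv.Perm (Fin n)) (i : Fin n) :
    (refType w i = RT.UU ∨ refType w i = RT.HO) ↔ i < w i := by
  have hf := fix_iff w i
  rw [Fin.lt_def]
  simp only [refType, Fin.lt_def]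
  split_ifs <;> simp <;> omega

lemma refType_Z {n : ℕ} (w : Equiv.Perm (Fin n)) (i : Fin n) :
    (refType w i = RT.DD ∨ refType w i = RT.HO) ↔ w.symm i < i := by
  have hf := fix_iff w i
  rw [Fin.lt_def]
  simp only [refType, Fin.lt_def]
  split_ifs <;> simp <;> omega

lemma refType_Y {n : ℕ} (w : Equiv.Perm (Fin n)) (i : Fin n) :
    (refType w i = RT.DD ∨ refType w i = RT.HI) ↔ w i < i := by
  have hf := fix_iff w i
  rw [Fin.lt_def]
  simp only [refType, Fin.lt_def]
  split_ifs <;> simp <;> omega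

lemma refType_W {n : ℕ} (w : Equiv.Perm (Fin n)) (i : Fin n) :
    (refType w i = RT.UU ∨ refType w i = RT.HI) ↔ i < w.symm i := by
  have hf := fix_iff w i
  rw [Fin.lt_def]
  simp only [refType, Fin.lt_def]
  split_ifs <;> simp <;> omega

lemma refType_F {n : ℕ} (w : Equiv.Perm (Fin n)) (i : Fin n) :
    refType w i = RT.FF ↔ w i = i := by
  have hf := fix_iff w i
  rw [← Fin.val_eq_val]
  simp only [refType, Fin.lt_def]
  split_ifs <;> simp <;> omega


def AscSet {n : ℕ} (X Z : Finset (Fin n)) : Finset (Fin n → Fin n) :=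
  univ.filter fun f => (∀ x, x ∉ X → f x = x) ∧ X.image f = Z ∧
    (∀ x ∈ X, x < f x) ∧ (∀ a ∈ X, ∀ b ∈ X, f a = f b → a = b)

lemma mem_AscSet {n : ℕ} {X Z : Finset (Fin n)} {f : Fin n → Fin n} :
    f ∈ AscSet X Z ↔ (∀ x, x ∉ X → f x = x) ∧ X.image f = Z ∧
      (∀ x ∈ X, x < f x) ∧ (∀ a ∈ X, ∀ b ∈ X, f a = f b → a = b) := by
  simp [AscSet]

lemma ascCardAux {n : ℕ} (k : ℕ) : ∀ (X Z : Finset (Fin n)), X.card = k → X.card = Z.card →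
    (AscSet X Z).card = ∏ x ∈ X, ((Z.filter (fun z => x < z)).card
      - (X.filter (fun y => x < y)).card) := by
  induction k with
  | zero =>
    intro X Z hk h
    have hX : X = ∅ := Finset.card_eq_zero.mp hk
    subst hX
    have hZ : Z = ∅ := Finset.card_eq_zero.mp (by omega)
    subst hZ
    rw [Finset.prod_empty, Finset.card_eq_one]
    refine ⟨id, ?_⟩
    ext f
    rw [mem_AscSet, Finset.mem_singleton]
    constructor
    · rintro ⟨h1, -, -, -⟩
      funext x
      exact h1 x (Finset.notMem_empty x)
    · rintro rfl
      exact ⟨fun x _ => rfl, by simp, by simp, by simp⟩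
  | succ k ih =>
    intro X Z hk h
    have hne : X.Nonempty := Finset.card_pos.mp (by omega)
    set M := X.max' hne with hMdef
    have hM : M ∈ X := X.max'_mem hne
    have key : ∀ f ∈ AscSet X Z, f M ∈ Z.filter (fun z => M < z) := by
      intro f hf
      rw [mem_AscSet] at hf
      obtain ⟨-, h2, h3, -⟩ := hf
      rw [Finset.mem_filter]
      exact ⟨h2 ▸ Finset.mem_image_of_mem f hM, h3 M hM⟩
    rw [Finset.card_eq_sum_card_fiberwise key]
    have fiber : ∀ z ∈ Z.filter (fun z => M < z),
        ((AscSet X Z).filter (fun f => f M = z)).card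
          = (AscSet (X.erase M) (Z.erase z)).card := by
      intro z hz
      rw [Finset.mem_filter] at hz
      obtain ⟨hzZ, hMz⟩ := hz
      refine Finset.card_bij' (fun f _ => Function.update f M M)
        (fun g _ => Function.update g M z) ?hi ?hj ?li ?ri
      case hi =>
        intro f hf
        beta_reduce
        rw [Finset.mem_filter] at hf
        obtain ⟨hf, hfM⟩ := hf
        rw [mem_AscSet] at hf
        obtain ⟨h1, h2, h3, h4⟩ := hf
        have hup : ∀ x, x ≠ M → Function.update f M M x = f x :=
          fun x hx => Function.update_of_ne hx _ _
        rw [mem_AscSet]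
        refine ⟨?_, ?_, ?_, ?_⟩
        · intro x hx
          by_cases hxM : x = M
          · subst hxM; simp
          · rw [hup x hxM]
            exact h1 x (fun hxX => hx (Finset.mem_erase.mpr ⟨hxM, hxX⟩))
        · ext k'
          simp only [Finset.mem_image, Finset.mem_erase]
          constructor
          · rintro ⟨x, ⟨hxM, hxX⟩, rfl⟩
            rw [hup x hxM]
            refine ⟨?_, h2 ▸ Finset.mem_image_of_mem f hxX⟩
            intro hxz
            exact hxM (h4 x hxX M hM (by rw [hxz, hfM]))
          · rintro ⟨hkz, hkZ⟩
            rw [← h2] at hkZ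
            obtain ⟨x, hxX, rfl⟩ := Finset.mem_image.mp hkZ
            have hxM : x ≠ M := fun e => hkz (by rw [e, hfM])
            exact ⟨x, ⟨hxM, hxX⟩, hup x hxM⟩
        · intro x hx
          obtain ⟨hxM, hxX⟩ := Finset.mem_erase.mp hx
          rw [hup x hxM]
          exact h3 x hxX
        · intro a ha b hb hab
          obtain ⟨haM, haX⟩ := Finset.mem_erase.mp ha
          obtain ⟨hbM, hbX⟩ := Finset.mem_erase.mp hb
          rw [hup a haM, hup b hbM] at hab
          exact h4 a haX b hbX hab
      case hj =>
        intro g hg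
        beta_reduce
        rw [mem_AscSet] at hg
        obtain ⟨h1, h2, h3, h4⟩ := hg
        have hgM : g M = M := h1 M (Finset.notMem_erase M X)
        have hup : ∀ x, x ≠ M → Function.update g M z x = g x :=
          fun x hx => Function.update_of_ne hx _ _
        rw [Finset.mem_filter, mem_AscSet]
        refine ⟨⟨?_, ?_, ?_, ?_⟩, Function.update_self M z g⟩
        · intro x hx
          have hxM : x ≠ M := fun e => hx (e ▸ hM)
          rw [hup x hxM]
          exact h1 x (fun hxe => hx (Finset.mem_of_mem_erase hxe))
        · rw [← Finset.insert_erase hM, Finset.image_insert, Function.update_self]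
          rw [Finset.image_congr (g := g) (fun x hx => hup x (Finset.mem_erase.mp hx).1), h2,
            Finset.insert_erase hzZ]
        · intro x hx
          by_cases hxM : x = M
          · subst hxM
            rw [Function.update_self]
            exact hMz
          · rw [hup x hxM]
            exact h3 x (Finset.mem_erase.mpr ⟨hxM, hx⟩)
        · intro a ha b hb hab
          by_cases haM : a = M <;> by_cases hbM : b = M
          · rw [haM, hbM]
          · exfalso
            subst haM
            rw [Function.update_self, hup b hbM] at hab
            have : g b ∈ Z.erase z := h2 ▸ Finset.mem_image_of_mem g (Finset.mem_erase.mpr ⟨hbM, hb⟩)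
            exact (Finset.mem_erase.mp this).1 hab.symm
          · exfalso
            subst hbM
            rw [Function.update_self, hup a haM] at hab
            have : g a ∈ Z.erase z := h2 ▸ Finset.mem_image_of_mem g (Finset.mem_erase.mpr ⟨haM, ha⟩)
            exact (Finset.mem_erase.mp this).1 hab
          · rw [hup a haM, hup b hbM] at hab
            exact h4 a (Finset.mem_erase.mpr ⟨haM, ha⟩) b (Finset.mem_erase.mpr ⟨hbM, hb⟩) hab
      case li =>
        intro f hf
        beta_reduce
        rw [Finset.mem_filter] at hf
        rw [Function.update_idem, ← hf.2, Function.update_eq_self]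
      case ri =>
        intro g hg
        beta_reduce
        rw [mem_AscSet] at hg
        have hgM : g M = M := hg.1 M (Finset.notMem_erase M X)
        rw [Function.update_idem, Function.update_eq_self_iff]
        exact hgM.symm
    rw [Finset.sum_congr rfl fiber]
    have hXM : X.filter (fun y => M < y) = ∅ := by
      apply Finset.filter_eq_empty_iff.mpr
      intro x hx
      exact not_lt.mpr (X.le_max' x hx)
    have step : ∀ z ∈ Z.filter (fun z => M < z),
        (AscSet (X.erase M) (Z.erase z)).card
          = ∏ x ∈ X.erase M, ((Z.filter (fun z' => x < z')).card
              - (X.filter (fun y => x < y)).card) := by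
      intro z hz
      rw [Finset.mem_filter] at hz
      obtain ⟨hzZ, hMz⟩ := hz
      rw [ih (X.erase M) (Z.erase z)
        (by rw [Finset.card_erase_of_mem hM, hk]; rfl)
        (by rw [Finset.card_erase_of_mem hM, Finset.card_erase_of_mem hzZ, h])]
      apply Finset.prod_congr rfl
      intro x hx
      obtain ⟨hxM, hxX⟩ := Finset.mem_erase.mp hx
      have hxMlt : x < M := lt_of_le_of_ne (X.le_max' x hxX) hxM
      have e1 : (Z.erase z).filter (fun z' => x < z') = (Z.filter (fun z' => x < z')).erase z := by
        ext a
        simp only [Finset.mem_filter, Finset.mem_erase]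
        tauto
      have e2 : (X.erase M).filter (fun y => x < y) = (X.filter (fun y => x < y)).erase M := by
        ext a
        simp only [Finset.mem_filter, Finset.mem_erase]
        tauto
      have hzmem : z ∈ Z.filter (fun z' => x < z') :=
        Finset.mem_filter.mpr ⟨hzZ, lt_trans hxMlt hMz⟩
      have hMmem : M ∈ X.filter (fun y => x < y) := Finset.mem_filter.mpr ⟨hM, hxMlt⟩
      rw [e1, e2, Finset.card_erase_of_mem hzmem, Finset.card_erase_of_mem hMmem]
      have hc1 : 1 ≤ (Z.filter (fun z' => x < z')).card := Finset.card_pos.mpr ⟨z, hzmem⟩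
      have hc2 : 1 ≤ (X.filter (fun y => x < y)).card := Finset.card_pos.mpr ⟨M, hMmem⟩
      omega
    rw [Finset.sum_congr rfl step, Finset.sum_const, smul_eq_mul,
      ← Finset.mul_prod_erase X _ hM, hXM]
    simp

lemma ascCard {n : ℕ} (X Z : Finset (Fin n)) (h : X.card = Z.card) :
    (AscSet X Z).card = ∏ x ∈ X, ((Z.filter (fun z => x < z)).card
      - (X.filter (fun y => x < y)).card) :=
  ascCardAux X.card X Z rfl h


def DescSet {n : ℕ} (X Z : Finset (Fin n)) : Finset (Fin n → Fin n) :=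
  univ.filter fun f => (∀ x, x ∉ X → f x = x) ∧ X.image f = Z ∧
    (∀ x ∈ X, f x < x) ∧ (∀ a ∈ X, ∀ b ∈ X, f a = f b → a = b)

lemma mem_DescSet {n : ℕ} {X Z : Finset (Fin n)} {f : Fin n → Fin n} :
    f ∈ DescSet X Z ↔ (∀ x, x ∉ X → f x = x) ∧ X.image f = Z ∧
      (∀ x ∈ X, f x < x) ∧ (∀ a ∈ X, ∀ b ∈ X, f a = f b → a = b) := by
  simp [DescSet]

lemma descCardAux {n : ℕ} (k : ℕ) : ∀ (X Z : Finset (Fin n)), X.card = k → X.card = Z.card →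
    (DescSet X Z).card = ∏ x ∈ X, ((Z.filter (fun z => z < x)).card
      - (X.filter (fun y => y < x)).card) := by
  induction k with
  | zero =>
    intro X Z hk h
    have hX : X = ∅ := Finset.card_eq_zero.mp hk
    subst hX
    have hZ : Z = ∅ := Finset.card_eq_zero.mp (by omega)
    subst hZ
    rw [Finset.prod_empty, Finset.card_eq_one]
    refine ⟨id, ?_⟩
    ext f
    rw [mem_DescSet, Finset.mem_singleton]
    constructor
    · rintro ⟨h1, -, -, -⟩
      funext x
      exact h1 x (Finset.notMem_empty x)
    · rintro rfl
      exact ⟨fun x _ => rfl, by simp, by simp, by simp⟩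
  | succ k ih =>
    intro X Z hk h
    have hne : X.Nonempty := Finset.card_pos.mp (by omega)
    set M := X.min' hne with hMdef
    have hM : M ∈ X := X.min'_mem hne
    have key : ∀ f ∈ DescSet X Z, f M ∈ Z.filter (fun z => z < M) := by
      intro f hf
      rw [mem_DescSet] at hf
      obtain ⟨-, h2, h3, -⟩ := hf
      rw [Finset.mem_filter]
      exact ⟨h2 ▸ Finset.mem_image_of_mem f hM, h3 M hM⟩
    rw [Finset.card_eq_sum_card_fiberwise key]
    have fiber : ∀ z ∈ Z.filter (fun z => z < M),
        ((DescSet X Z).filter (fun f => f M = z)).card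
          = (DescSet (X.erase M) (Z.erase z)).card := by
      intro z hz
      rw [Finset.mem_filter] at hz
      obtain ⟨hzZ, hMz⟩ := hz
      refine Finset.card_bij' (fun f _ => Function.update f M M)
        (fun g _ => Function.update g M z) ?hi ?hj ?li ?ri
      case hi =>
        intro f hf
        beta_reduce
        rw [Finset.mem_filter] at hf
        obtain ⟨hf, hfM⟩ := hf
        rw [mem_DescSet] at hf
        obtain ⟨h1, h2, h3, h4⟩ := hf
        have hup : ∀ x, x ≠ M → Function.update f M M x = f x :=
          fun x hx => Function.update_of_ne hx _ _
        rw [mem_DescSet]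
        refine ⟨?_, ?_, ?_, ?_⟩
        · intro x hx
          by_cases hxM : x = M
          · subst hxM; simp
          · rw [hup x hxM]
            exact h1 x (fun hxX => hx (Finset.mem_erase.mpr ⟨hxM, hxX⟩))
        · ext k'
          simp only [Finset.mem_image, Finset.mem_erase]
          constructor
          · rintro ⟨x, ⟨hxM, hxX⟩, rfl⟩
            rw [hup x hxM]
            refine ⟨?_, h2 ▸ Finset.mem_image_of_mem f hxX⟩
            intro hxz
            exact hxM (h4 x hxX M hM (by rw [hxz, hfM]))
          · rintro ⟨hkz, hkZ⟩
            rw [← h2] at hkZ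
            obtain ⟨x, hxX, rfl⟩ := Finset.mem_image.mp hkZ
            have hxM : x ≠ M := fun e => hkz (by rw [e, hfM])
            exact ⟨x, ⟨hxM, hxX⟩, hup x hxM⟩
        · intro x hx
          obtain ⟨hxM, hxX⟩ := Finset.mem_erase.mp hx
          rw [hup x hxM]
          exact h3 x hxX
        · intro a ha b hb hab
          obtain ⟨haM, haX⟩ := Finset.mem_erase.mp ha
          obtain ⟨hbM, hbX⟩ := Finset.mem_erase.mp hb
          rw [hup a haM, hup b hbM] at hab
          exact h4 a haX b hbX hab
      case hj =>
        intro g hg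
        beta_reduce
        rw [mem_DescSet] at hg
        obtain ⟨h1, h2, h3, h4⟩ := hg
        have hgM : g M = M := h1 M (Finset.notMem_erase M X)
        have hup : ∀ x, x ≠ M → Function.update g M z x = g x :=
          fun x hx => Function.update_of_ne hx _ _
        rw [Finset.mem_filter, mem_DescSet]
        refine ⟨⟨?_, ?_, ?_, ?_⟩, Function.update_self M z g⟩
        · intro x hx
          have hxM : x ≠ M := fun e => hx (e ▸ hM)
          rw [hup x hxM]
          exact h1 x (fun hxe => hx (Finset.mem_of_mem_erase hxe))
        · rw [← Finset.insert_erase hM, Finset.image_insert, Function.update_self]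
          rw [Finset.image_congr (g := g) (fun x hx => hup x (Finset.mem_erase.mp hx).1), h2,
            Finset.insert_erase hzZ]
        · intro x hx
          by_cases hxM : x = M
          · subst hxM
            rw [Function.update_self]
            exact hMz
          · rw [hup x hxM]
            exact h3 x (Finset.mem_erase.mpr ⟨hxM, hx⟩)
        · intro a ha b hb hab
          by_cases haM : a = M <;> by_cases hbM : b = M
          · rw [haM, hbM]
          · exfalso
            subst haM
            rw [Function.update_self, hup b hbM] at hab
            have : g b ∈ Z.erase z := h2 ▸ Finset.mem_image_of_mem g (Finset.mem_erase.mpr ⟨hbM, hb⟩)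
            exact (Finset.mem_erase.mp this).1 hab.symm
          · exfalso
            subst hbM
            rw [Function.update_self, hup a haM] at hab
            have : g a ∈ Z.erase z := h2 ▸ Finset.mem_image_of_mem g (Finset.mem_erase.mpr ⟨haM, ha⟩)
            exact (Finset.mem_erase.mp this).1 hab
          · rw [hup a haM, hup b hbM] at hab
            exact h4 a (Finset.mem_erase.mpr ⟨haM, ha⟩) b (Finset.mem_erase.mpr ⟨hbM, hb⟩) hab
      case li =>
        intro f hf
        beta_reduce
        rw [Finset.mem_filter] at hf
        rw [Function.update_idem, ← hf.2, Function.update_eq_self]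
      case ri =>
        intro g hg
        beta_reduce
        rw [mem_DescSet] at hg
        have hgM : g M = M := hg.1 M (Finset.notMem_erase M X)
        rw [Function.update_idem, Function.update_eq_self_iff]
        exact hgM.symm
    rw [Finset.sum_congr rfl fiber]
    have hXM : X.filter (fun y => y < M) = ∅ := by
      apply Finset.filter_eq_empty_iff.mpr
      intro x hx
      exact not_lt.mpr (X.min'_le x hx)
    have step : ∀ z ∈ Z.filter (fun z => z < M),
        (DescSet (X.erase M) (Z.erase z)).card
          = ∏ x ∈ X.erase M, ((Z.filter (fun z' => z' < x)).card
              - (X.filter (fun y => y < x)).card) := by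
      intro z hz
      rw [Finset.mem_filter] at hz
      obtain ⟨hzZ, hMz⟩ := hz
      rw [ih (X.erase M) (Z.erase z)
        (by rw [Finset.card_erase_of_mem hM, hk]; rfl)
        (by rw [Finset.card_erase_of_mem hM, Finset.card_erase_of_mem hzZ, h])]
      apply Finset.prod_congr rfl
      intro x hx
      obtain ⟨hxM, hxX⟩ := Finset.mem_erase.mp hx
      have hxMlt : M < x := lt_of_le_of_ne (X.min'_le x hxX) (Ne.symm hxM)
      have e1 : (Z.erase z).filter (fun z' => z' < x) = (Z.filter (fun z' => z' < x)).erase z := by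
        ext a
        simp only [Finset.mem_filter, Finset.mem_erase]
        tauto
      have e2 : (X.erase M).filter (fun y => y < x) = (X.filter (fun y => y < x)).erase M := by
        ext a
        simp only [Finset.mem_filter, Finset.mem_erase]
        tauto
      have hzmem : z ∈ Z.filter (fun z' => z' < x) :=
        Finset.mem_filter.mpr ⟨hzZ, lt_trans hMz hxMlt⟩
      have hMmem : M ∈ X.filter (fun y => y < x) := Finset.mem_filter.mpr ⟨hM, hxMlt⟩
      rw [e1, e2, Finset.card_erase_of_mem hzmem, Finset.card_erase_of_mem hMmem]
      have hc1 : 1 ≤ (Z.filter (fun z' => z' < x)).card := Finset.card_pos.mpr ⟨z, hzmem⟩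
      have hc2 : 1 ≤ (X.filter (fun y => y < x)).card := Finset.card_pos.mpr ⟨M, hMmem⟩
      omega
    rw [Finset.sum_congr rfl step, Finset.sum_const, smul_eq_mul,
      ← Finset.mul_prod_erase X _ hM, hXM]
    simp

lemma descCard {n : ℕ} (X Z : Finset (Fin n)) (h : X.card = Z.card) :
    (DescSet X Z).card = ∏ x ∈ X, ((Z.filter (fun z => z < x)).card
      - (X.filter (fun y => y < x)).card) :=
  descCardAux X.card X Z rfl h

section Rest
variable {n : ℕ}

def Xset (τ : Fin n → RT) : Finset (Fin n) :=
  univ.filter fun i => τ i = RT.UU ∨ τ i = RT.HO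
def Zset (τ : Fin n → RT) : Finset (Fin n) :=
  univ.filter fun i => τ i = RT.DD ∨ τ i = RT.HO
def Yset (τ : Fin n → RT) : Finset (Fin n) :=
  univ.filter fun i => τ i = RT.DD ∨ τ i = RT.HI
def Wset (τ : Fin n → RT) : Finset (Fin n) :=
  univ.filter fun i => τ i = RT.UU ∨ τ i = RT.HI

lemma mem_Xset {τ : Fin n → RT} {i : Fin n} :
    i ∈ Xset τ ↔ (τ i = RT.UU ∨ τ i = RT.HO) := by simp [Xset]
lemma mem_Zset {τ : Fin n → RT} {i : Fin n} :
    i ∈ Zset τ ↔ (τ i = RT.DD ∨ τ i = RT.HO) := by simp [Zset]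
lemma mem_Yset {τ : Fin n → RT} {i : Fin n} :
    i ∈ Yset τ ↔ (τ i = RT.DD ∨ τ i = RT.HI) := by simp [Yset]
lemma mem_Wset {τ : Fin n → RT} {i : Fin n} :
    i ∈ Wset τ ↔ (τ i = RT.UU ∨ τ i = RT.HI) := by simp [Wset]

lemma memX_iff {w : Equiv.Perm (Fin n)} {τ : Fin n → RT} (hw : refType w = τ) {i : Fin n} :
    i ∈ Xset τ ↔ i < w i := by
  rw [mem_Xset, ← show refType w i = τ i from congrFun hw i]; exact refType_X w i
lemma memZ_iff {w : Equiv.Perm (Fin n)} {τ : Fin n → RT} (hw : refType w = τ) {i : Fin n} :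
    i ∈ Zset τ ↔ w.symm i < i := by
  rw [mem_Zset, ← show refType w i = τ i from congrFun hw i]; exact refType_Z w i
lemma memY_iff {w : Equiv.Perm (Fin n)} {τ : Fin n → RT} (hw : refType w = τ) {i : Fin n} :
    i ∈ Yset τ ↔ w i < i := by
  rw [mem_Yset, ← show refType w i = τ i from congrFun hw i]; exact refType_Y w i
lemma memW_iff {w : Equiv.Perm (Fin n)} {τ : Fin n → RT} (hw : refType w = τ) {i : Fin n} :
    i ∈ Wset τ ↔ i < w.symm i := by
  rw [mem_Wset, ← show refType w i = τ i from congrFun hw i]; exact refType_W w i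

lemma X_disj_Y {τ : Fin n → RT} {i : Fin n} (hx : i ∈ Xset τ) (hy : i ∈ Yset τ) : False := by
  rw [mem_Xset] at hx; rw [mem_Yset] at hy
  rcases hx with h | h <;> rcases hy with h' | h' <;> simp [h] at h'

lemma notXY_FF {τ : Fin n → RT} {i : Fin n} (hx : i ∉ Xset τ) (hy : i ∉ Yset τ) :
    τ i = RT.FF := by
  rw [mem_Xset] at hx; rw [mem_Yset] at hy
  cases h : τ i <;> simp [h] at hx hy ⊢

/-- the underlying function of the permutation built from an (f,g) pair -/
def mkFun (τ : Fin n → RT) (fg : (Fin n → Fin n) × (Fin n → Fin n)) : Fin n → Fin n :=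
  fun i => if i ∈ Xset τ then fg.1 i else if i ∈ Yset τ then fg.2 i else i

lemma mkFun_bij (τ : Fin n → RT) (fg : (Fin n → Fin n) × (Fin n → Fin n))
    (h : fg ∈ AscSet (Xset τ) (Zset τ) ×ˢ DescSet (Yset τ) (Wset τ)) :
    Function.Bijective (mkFun τ fg) := by
  rw [Finset.mem_product] at h
  obtain ⟨hf, hg⟩ := h
  rw [mem_AscSet] at hf
  obtain ⟨f1, f2, f3, f4⟩ := hf
  rw [mem_DescSet] at hg
  obtain ⟨g1, g2, g3, g4⟩ := hg
  rw [← Finite.injective_iff_bijective]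
  intro a b hab
  have classify : ∀ c, (c ∈ Xset τ ∧ mkFun τ fg c ∈ Zset τ)
      ∨ (c ∉ Xset τ ∧ c ∈ Yset τ ∧ mkFun τ fg c ∈ Wset τ)
      ∨ (c ∉ Xset τ ∧ c ∉ Yset τ ∧ mkFun τ fg c = c) := by
    intro c
    by_cases hc : c ∈ Xset τ
    · left
      refine ⟨hc, ?_⟩
      simp only [mkFun, if_pos hc]
      exact f2 ▸ Finset.mem_image_of_mem fg.1 hc
    · by_cases hc' : c ∈ Yset τ
      · right; left
        refine ⟨hc, hc', ?_⟩
        simp only [mkFun, if_neg hc, if_pos hc']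
        exact g2 ▸ Finset.mem_image_of_mem fg.2 hc'
      · right; right
        refine ⟨hc, hc', ?_⟩
        simp only [mkFun, if_neg hc, if_neg hc']
  have hZW : ∀ c, c ∈ Zset τ → c ∈ Wset τ → False := by
    intro c h1 h2
    rw [mem_Zset] at h1; rw [mem_Wset] at h2
    rcases h1 with h | h <;> rcases h2 with h' | h' <;> simp [h] at h'
  have hZF : ∀ c, c ∈ Zset τ → τ c = RT.FF → False := by
    intro c h1 h2
    rw [mem_Zset] at h1
    rcases h1 with h | h <;> rw [h2] at h <;> simp at h
  have hWF : ∀ c, c ∈ Wset τ → τ c = RT.FF → False := by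
    intro c h1 h2
    rw [mem_Wset] at h1
    rcases h1 with h | h <;> rw [h2] at h <;> simp at h
  rcases classify a with ⟨ha1, ha2⟩ | ⟨ha0, ha1, ha2⟩ | ⟨ha0, ha1, ha2⟩ <;>
    rcases classify b with ⟨hb1, hb2⟩ | ⟨hb0, hb1, hb2⟩ | ⟨hb0, hb1, hb2⟩
  · apply f4 a ha1 b hb1
    simpa only [mkFun, if_pos ha1, if_pos hb1] using hab
  · exfalso; rw [hab] at ha2; exact hZW _ ha2 hb2
  · exfalso; rw [hab, hb2] at ha2; exact hZF b ha2 (notXY_FF hb0 hb1)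
  · exfalso; rw [← hab] at hb2; exact hZW _ hb2 ha2
  · apply g4 a ha1 b hb1
    simpa only [mkFun, if_neg ha0, if_pos ha1, if_neg hb0, if_pos hb1] using hab
  · exfalso; rw [hab, hb2] at ha2; exact hWF b ha2 (notXY_FF hb0 hb1)
  · exfalso; rw [← hab, ha2] at hb2; exact hZF a hb2 (notXY_FF ha0 ha1)
  · exfalso; rw [← hab, ha2] at hb2; exact hWF a hb2 (notXY_FF ha0 ha1)
  · rw [ha2, hb2] at hab; exact hab

noncomputable def mkPerm (τ : Fin n → RT) (fg : (Fin n → Fin n) × (Fin n → Fin n))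
    (h : fg ∈ AscSet (Xset τ) (Zset τ) ×ˢ DescSet (Yset τ) (Wset τ)) : Equiv.Perm (Fin n) :=
  Equiv.ofBijective (mkFun τ fg) (mkFun_bij τ fg h)

lemma fiber_bij (τ : Fin n → RT) :
    (univ.filter fun w : Equiv.Perm (Fin n) => refType w = τ).card
      = ((AscSet (Xset τ) (Zset τ)) ×ˢ (DescSet (Yset τ) (Wset τ))).card := by
  refine Finset.card_bij' (fun w _ => ((fun x => if x ∈ Xset τ then w x else x),
    (fun y => if y ∈ Yset τ then w y else y))) (fun fg hfg => mkPerm τ fg hfg) ?hi ?hj ?li ?ri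
  case hi =>
    intro w hw0
    rw [Finset.mem_filter] at hw0
    have hw := hw0.2
    rw [Finset.mem_product]
    constructor
    · show (fun x => if x ∈ Xset τ then w x else x) ∈ AscSet (Xset τ) (Zset τ)
      rw [mem_AscSet]
      refine ⟨fun x hx => if_neg hx, ?_, ?_, ?_⟩
      · ext k
        simp only [Finset.mem_image]
        constructor
        · rintro ⟨x, hx, rfl⟩
          beta_reduce
          rw [if_pos hx, memZ_iff hw]
          have : x < w x := (memX_iff hw).mp hx
          rwa [Equiv.symm_apply_apply]
        · intro hk
          have h1 : w.symm k < k := (memZ_iff hw).mp hk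
          have hmem : w.symm k ∈ Xset τ := by
            rw [memX_iff hw, Equiv.apply_symm_apply]; exact h1
          refine ⟨w.symm k, hmem, ?_⟩
          beta_reduce
          rw [if_pos hmem, Equiv.apply_symm_apply]
      · intro x hx
        beta_reduce
        rw [if_pos hx]
        exact (memX_iff hw).mp hx
      · intro a ha b hb hab
        beta_reduce at hab
        rw [if_pos ha, if_pos hb] at hab
        exact w.injective hab
    · show (fun y => if y ∈ Yset τ then w y else y) ∈ DescSet (Yset τ) (Wset τ)
      rw [mem_DescSet]
      refine ⟨fun y hy => if_neg hy, ?_, ?_, ?_⟩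
      · ext k
        simp only [Finset.mem_image]
        constructor
        · rintro ⟨y, hy, rfl⟩
          beta_reduce
          rw [if_pos hy, memW_iff hw]
          have : w y < y := (memY_iff hw).mp hy
          rwa [Equiv.symm_apply_apply]
        · intro hk
          have h1 : k < w.symm k := (memW_iff hw).mp hk
          have hmem : w.symm k ∈ Yset τ := by
            rw [memY_iff hw, Equiv.apply_symm_apply]; exact h1
          refine ⟨w.symm k, hmem, ?_⟩
          beta_reduce
          rw [if_pos hmem, Equiv.apply_symm_apply]
      · intro y hy
        beta_reduce
        rw [if_pos hy]
        exact (memY_iff hw).mp hy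
      · intro a ha b hb hab
        beta_reduce at hab
        rw [if_pos ha, if_pos hb] at hab
        exact w.injective hab
  case hj =>
    intro fg hfg
    rw [Finset.mem_filter]
    refine ⟨Finset.mem_univ _, ?_⟩
    -- refType (mkPerm τ fg hfg) = τ
    have hfg' := hfg
    rw [Finset.mem_product] at hfg'
    obtain ⟨hf, hg⟩ := hfg'
    rw [mem_AscSet] at hf
    obtain ⟨f1, f2, f3, f4⟩ := hf
    rw [mem_DescSet] at hg
    obtain ⟨g1, g2, g3, g4⟩ := hg
    set w := mkPerm τ fg hfg with hwdef
    have happ : ∀ i, w i = mkFun τ fg i := fun i => rfl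
    have hX : ∀ i, i ∈ Xset τ → i < w i ∧ w i = fg.1 i := by
      intro i hi
      rw [happ]; simp only [mkFun, if_pos hi]
      exact ⟨f3 i hi, trivial⟩
    have hY : ∀ i, i ∈ Yset τ → w i < i ∧ w i = fg.2 i := by
      intro i hi
      have hix : i ∉ Xset τ := fun hx => X_disj_Y hx hi
      rw [happ]; simp only [mkFun, if_neg hix, if_pos hi]
      exact ⟨g3 i hi, trivial⟩
    have hFF : ∀ i, τ i = RT.FF → w i = i := by
      intro i hi
      have hix : i ∉ Xset τ := by rw [mem_Xset, hi]; simp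
      have hiy : i ∉ Yset τ := by rw [mem_Yset, hi]; simp
      rw [happ]; simp only [mkFun, if_neg hix, if_neg hiy]
    have hZ : ∀ i, i ∈ Zset τ → w.symm i < i := by
      intro i hi
      rw [← f2] at hi
      obtain ⟨x, hx, hfx⟩ := Finset.mem_image.mp hi
      have hwx : w x = i := by rw [(hX x hx).2, hfx]
      rw [← hwx, Equiv.symm_apply_apply]
      exact (hX x hx).1
    have hW : ∀ i, i ∈ Wset τ → i < w.symm i := by
      intro i hi
      rw [← g2] at hi
      obtain ⟨y, hy, hgy⟩ := Finset.mem_image.mp hi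
      have hwy : w y = i := by rw [(hY y hy).2, hgy]
      rw [← hwy, Equiv.symm_apply_apply]
      exact (hY y hy).1
    funext i
    rcases hτ : τ i with _ | _ | _ | _ | _
    · -- UU
      have h1 : i < w i := (hX i (mem_Xset.mpr (Or.inl hτ))).1
      have h2 : i < w.symm i := hW i (mem_Wset.mpr (Or.inl hτ))
      simp only [refType]
      rw [if_pos ⟨h1, h2⟩]
    · -- DD
      have h1 : w i < i := (hY i (mem_Yset.mpr (Or.inl hτ))).1
      have h2 : w.symm i < i := hZ i (mem_Zset.mpr (Or.inl hτ))
      simp only [refType]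
      rw [if_neg (by rintro ⟨h, -⟩; exact absurd h (not_lt.mpr h1.le)), if_pos ⟨h1, h2⟩]
    · -- HO
      have h1 : i < w i := (hX i (mem_Xset.mpr (Or.inr hτ))).1
      have h2 : w.symm i < i := hZ i (mem_Zset.mpr (Or.inr hτ))
      simp only [refType]
      rw [if_neg (by rintro ⟨-, h⟩; exact absurd h (not_lt.mpr h2.le)),
        if_neg (by rintro ⟨h, -⟩; exact absurd h (not_lt.mpr h1.le)), if_pos h1]
    · -- HI
      have h1 : w i < i := (hY i (mem_Yset.mpr (Or.inr hτ))).1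
      have h2 : i < w.symm i := hW i (mem_Wset.mpr (Or.inr hτ))
      simp only [refType]
      rw [if_neg (by rintro ⟨h, -⟩; exact absurd h (not_lt.mpr h1.le)),
        if_neg (by rintro ⟨-, h⟩; exact absurd h (not_lt.mpr h2.le)),
        if_neg (not_lt.mpr h1.le), if_pos h1]
    · -- FF
      have h1 : w i = i := hFF i hτ
      have h2 : w.symm i = i := by
        conv_lhs => rw [← h1, Equiv.symm_apply_apply]
      simp only [refType, h1, h2]
      rw [if_neg (by simp), if_neg (by simp), if_neg (lt_irrefl i), if_neg (lt_irrefl i)]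
  case li =>
    intro w hw0
    rw [Finset.mem_filter] at hw0
    have hw := hw0.2
    apply Equiv.ext
    intro i
    show (if i ∈ Xset τ then (fun x => if x ∈ Xset τ then w x else x) i
      else if i ∈ Yset τ then (fun y => if y ∈ Yset τ then w y else y) i else i) = w i
    beta_reduce
    by_cases hx : i ∈ Xset τ
    · rw [if_pos hx, if_pos hx]
    · rw [if_neg hx]
      by_cases hy : i ∈ Yset τ
      · rw [if_pos hy, if_pos hy]
      · rw [if_neg hy]
        have h1 : τ i = RT.FF := notXY_FF hx hy
        exact ((refType_F w i).mp (by rw [hw]; exact h1)).symm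
  case ri =>
    intro fg hfg
    have hfg' := hfg
    rw [Finset.mem_product] at hfg'
    obtain ⟨hf, hg⟩ := hfg'
    rw [mem_AscSet] at hf
    rw [mem_DescSet] at hg
    apply Prod.ext
    · funext x
      show (if x ∈ Xset τ then (mkPerm τ fg hfg) x else x) = fg.1 x
      by_cases hx : x ∈ Xset τ
      · rw [if_pos hx]
        show mkFun τ fg x = fg.1 x
        simp only [mkFun, if_pos hx]
      · rw [if_neg hx]
        exact (hf.1 x hx).symm
    · funext y
      show (if y ∈ Yset τ then (mkPerm τ fg hfg) y else y) = fg.2 y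
      by_cases hy : y ∈ Yset τ
      · rw [if_pos hy]
        show mkFun τ fg y = fg.2 y
        have hyx : y ∉ Xset τ := fun hx => X_disj_Y hx hy
        simp only [mkFun, if_neg hyx, if_pos hy]
      · rw [if_neg hy]
        exact (hg.1 y hy).symm

end Rest

section Count
variable {n : ℕ} (p : Fin n → Step) (τ : Fin n → RT)

open Finset

lemma cntLE_split (y : Fin n) (s : Step) :
    (univ.filter fun j => j ≤ y ∧ p j = s).card
      = (univ.filter fun j => j < y ∧ p j = s).card + (if p y = s then 1 else 0) := by
  rw [Finset.card_filter, Finset.card_filter]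
  have key : ∀ j : Fin n, (if j ≤ y ∧ p j = s then (1:ℕ) else 0)
      = (if j < y ∧ p j = s then 1 else 0) + (if j = y ∧ p j = s then 1 else 0) := by
    intro j
    rcases lt_trichotomy j y with h | h | h
    · by_cases hs : p j = s <;> simp [h, h.le, hs, h.ne]
    · subst h
      by_cases hs : p j = s <;> simp [hs, lt_irrefl]
    · by_cases hs : p j = s <;> simp [hs, not_le.mpr h, lt_asymm h, h.ne']
  rw [Finset.sum_congr rfl (fun j _ => key j), Finset.sum_add_distrib]
  congr 1
  rw [Finset.sum_eq_single_of_mem y (Finset.mem_univ y) (fun j _ hj => by simp [hj])]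
  by_cases hs : p y = s <;> simp [hs]

lemma cnt_all_split (x : Fin n) (s : Step) :
    (univ.filter fun j => x < j ∧ p j = s).card + (univ.filter fun j => j ≤ x ∧ p j = s).card
      = (univ.filter fun j => p j = s).card := by
  rw [Finset.card_filter, Finset.card_filter, Finset.card_filter, ← Finset.sum_add_distrib]
  refine Finset.sum_congr rfl fun j _ => ?_
  by_cases hs : p j = s
  · by_cases hx : x < j
    · simp [hs, hx, not_le.mpr hx]
    · simp [hs, hx, not_lt.mp hx]
  · simp [hs]

lemma motz_all (hp : IsMotzkin p) :
    (univ.filter fun j => p j = Step.U).card = (univ.filter fun j => p j = Step.D).card := by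
  have h := hp.2
  rw [countIn, countIn] at h
  have es : ∀ s : Step, (univ.filter fun j : Fin n => (j : ℕ) < n ∧ p j = s)
      = univ.filter fun j => p j = s := fun s => Finset.filter_congr (fun j _ => by simp [j.isLt])
  rw [es, es] at h
  exact h

lemma motz_le (hp : IsMotzkin p) (x : Fin n) :
    (univ.filter fun j => j ≤ x ∧ p j = Step.D).card
      ≤ (univ.filter fun j => j ≤ x ∧ p j = Step.U).card := by
  have h := hp.1 ((x : ℕ) + 1) (by have := x.isLt; omega)
  rw [countIn, countIn] at h
  have es : ∀ s : Step, (univ.filter fun j : Fin n => (j : ℕ) < (x : ℕ) + 1 ∧ p j = s)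
      = univ.filter fun j => j ≤ x ∧ p j = s :=
    fun s => Finset.filter_congr (fun j _ => by rw [Nat.lt_succ_iff, ← Fin.le_def])
  rw [es, es] at h
  exact h

lemma factorX (hp : IsMotzkin p) (hc : ∀ i, rtToStep (τ i) = p i) {x : Fin n}
    (hx : x ∈ Xset τ) :
    ((Zset τ).filter fun z => x < z).card - ((Xset τ).filter fun y => x < y).card
      = heightAt p x := by
  have eZ : ((Zset τ).filter fun z => x < z).card
      = (univ.filter fun j => x < j ∧ p j = Step.D).card
        + (univ.filter fun j => x < j ∧ τ j = RT.HO).card := by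
    rw [Zset, Finset.filter_filter, Finset.card_filter, Finset.card_filter, Finset.card_filter,
      ← Finset.sum_add_distrib]
    refine Finset.sum_congr rfl fun j _ => ?_
    have hpj : p j = rtToStep (τ j) := (hc j).symm
    rw [hpj]
    by_cases hxj : x < j <;> rcases hτ : τ j <;> simp [hτ, rtToStep, hxj]
  have eX : ((Xset τ).filter fun y => x < y).card
      = (univ.filter fun j => x < j ∧ p j = Step.U).card
        + (univ.filter fun j => x < j ∧ τ j = RT.HO).card := by
    rw [Xset, Finset.filter_filter, Finset.card_filter, Finset.card_filter, Finset.card_filter,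
      ← Finset.sum_add_distrib]
    refine Finset.sum_congr rfl fun j _ => ?_
    have hpj : p j = rtToStep (τ j) := (hc j).symm
    rw [hpj]
    by_cases hxj : x < j <;> rcases hτ : τ j <;> simp [hτ, rtToStep, hxj]
  have tU := cnt_all_split p x Step.U
  have tD := cnt_all_split p x Step.D
  have hUD := motz_all p hp
  have hle := motz_le p hp x
  have hpx : p x ≠ Step.D := by
    rw [mem_Xset] at hx
    rcases hx with h | h <;> rw [← hc x, h] <;> simp [rtToStep]
  rw [heightAt, if_neg hpx]
  omega

lemma factorY (hp : IsMotzkin p) (hc : ∀ i, rtToStep (τ i) = p i) {y : Fin n}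
    (hy : y ∈ Yset τ) :
    ((Wset τ).filter fun z => z < y).card - ((Yset τ).filter fun x => x < y).card
      = heightAt p y := by
  have eW : ((Wset τ).filter fun z => z < y).card
      = (univ.filter fun j => j < y ∧ p j = Step.U).card
        + (univ.filter fun j => j < y ∧ τ j = RT.HI).card := by
    rw [Wset, Finset.filter_filter, Finset.card_filter, Finset.card_filter, Finset.card_filter,
      ← Finset.sum_add_distrib]
    refine Finset.sum_congr rfl fun j _ => ?_
    have hpj : p j = rtToStep (τ j) := (hc j).symm
    rw [hpj]
    by_cases hyj : j < y <;> rcases hτ : τ j <;> simp [hτ, rtToStep, hyj]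
  have eY : ((Yset τ).filter fun x => x < y).card
      = (univ.filter fun j => j < y ∧ p j = Step.D).card
        + (univ.filter fun j => j < y ∧ τ j = RT.HI).card := by
    rw [Yset, Finset.filter_filter, Finset.card_filter, Finset.card_filter, Finset.card_filter,
      ← Finset.sum_add_distrib]
    refine Finset.sum_congr rfl fun j _ => ?_
    have hpj : p j = rtToStep (τ j) := (hc j).symm
    rw [hpj]
    by_cases hyj : j < y <;> rcases hτ : τ j <;> simp [hτ, rtToStep, hyj]
  have sU := cntLE_split p y Step.U
  have sD := cntLE_split p y Step.D
  have hle := motz_le p hp y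
  have hpy : p y ≠ Step.U := by
    rw [mem_Yset] at hy
    rcases hy with h | h <;> rw [← hc y, h] <;> simp [rtToStep]
  rw [if_neg hpy] at sU
  rw [heightAt]
  by_cases hD : p y = Step.D
  · rw [if_pos hD]
    rw [if_pos hD] at sD
    omega
  · rw [if_neg hD]
    rw [if_neg hD] at sD
    omega

lemma cardXZ (hp : IsMotzkin p) (hc : ∀ i, rtToStep (τ i) = p i) :
    (Xset τ).card = (Zset τ).card := by
  have eX : (Xset τ).card
      = (univ.filter fun j => p j = Step.U).card
        + (univ.filter fun j => τ j = RT.HO).card := by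
    rw [Xset, Finset.card_filter, Finset.card_filter, Finset.card_filter,
      ← Finset.sum_add_distrib]
    refine Finset.sum_congr rfl fun j _ => ?_
    have hpj : p j = rtToStep (τ j) := (hc j).symm
    rw [hpj]
    rcases hτ : τ j <;> simp [hτ, rtToStep]
  have eZ : (Zset τ).card
      = (univ.filter fun j => p j = Step.D).card
        + (univ.filter fun j => τ j = RT.HO).card := by
    rw [Zset, Finset.card_filter, Finset.card_filter, Finset.card_filter,
      ← Finset.sum_add_distrib]
    refine Finset.sum_congr rfl fun j _ => ?_
    have hpj : p j = rtToStep (τ j) := (hc j).symm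
    rw [hpj]
    rcases hτ : τ j <;> simp [hτ, rtToStep]
  have hUD := motz_all p hp
  omega

lemma cardYW (hp : IsMotzkin p) (hc : ∀ i, rtToStep (τ i) = p i) :
    (Yset τ).card = (Wset τ).card := by
  have eY : (Yset τ).card
      = (univ.filter fun j => p j = Step.D).card
        + (univ.filter fun j => τ j = RT.HI).card := by
    rw [Yset, Finset.card_filter, Finset.card_filter, Finset.card_filter,
      ← Finset.sum_add_distrib]
    refine Finset.sum_congr rfl fun j _ => ?_
    have hpj : p j = rtToStep (τ j) := (hc j).symm
    rw [hpj]
    rcases hτ : τ j <;> simp [hτ, rtToStep]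
  have eW : (Wset τ).card
      = (univ.filter fun j => p j = Step.U).card
        + (univ.filter fun j => τ j = RT.HI).card := by
    rw [Wset, Finset.card_filter, Finset.card_filter, Finset.card_filter,
      ← Finset.sum_add_distrib]
    refine Finset.sum_congr rfl fun j _ => ?_
    have hpj : p j = rtToStep (τ j) := (hc j).symm
    rw [hpj]
    rcases hτ : τ j <;> simp [hτ, rtToStep]
  have hUD := motz_all p hp
  omega

lemma fiber_card (hp : IsMotzkin p) (hc : ∀ i, rtToStep (τ i) = p i) :
    (univ.filter fun w : Equiv.Perm (Fin n) => refType w = τ).card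
      = ∏ i : Fin n, (if τ i = RT.FF then 1 else heightAt p i) := by
  rw [fiber_bij τ, Finset.card_product]
  rw [ascCard _ _ (cardXZ p τ hp hc), descCard _ _ (cardYW p τ hp hc)]
  rw [Finset.prod_congr rfl (fun x hx => factorX p τ hp hc hx),
    Finset.prod_congr rfl (fun y hy => factorY p τ hp hc hy)]
  have main : ∏ i : Fin n, (if τ i = RT.FF then 1 else heightAt p i)
      = (∏ x ∈ Xset τ, heightAt p x) * ∏ y ∈ Yset τ, heightAt p y := by
    rw [← Finset.prod_filter_mul_prod_filter_not univ (fun i => τ i = RT.UU ∨ τ i = RT.HO)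
      (fun i => if τ i = RT.FF then 1 else heightAt p i)]
    congr 1
    · refine Finset.prod_congr rfl fun i hi => ?_
      rw [mem_Xset] at hi
      refine if_neg ?_
      rcases hi with h | h <;> simp [h]
    · rw [← Finset.prod_filter_mul_prod_filter_not
        (univ.filter fun i => ¬(τ i = RT.UU ∨ τ i = RT.HO))
        (fun i => τ i = RT.DD ∨ τ i = RT.HI)
        (fun i => if τ i = RT.FF then 1 else heightAt p i)]
      have h2 : (univ.filter fun i => ¬(τ i = RT.UU ∨ τ i = RT.HO)).filter
          (fun i => τ i = RT.DD ∨ τ i = RT.HI) = Yset τ := by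
        rw [Finset.filter_filter, Yset]
        apply Finset.filter_congr
        intro i _
        rcases hτ : τ i <;> simp
      have h3 : ∏ i ∈ (univ.filter fun i => ¬(τ i = RT.UU ∨ τ i = RT.HO)).filter
          (fun i => ¬(τ i = RT.DD ∨ τ i = RT.HI)), (if τ i = RT.FF then 1 else heightAt p i)
            = 1 := by
        apply Finset.prod_eq_one
        intro i hi
        rw [Finset.filter_filter, Finset.mem_filter] at hi
        refine if_pos ?_
        rcases hτ : τ i <;> simp [hτ] at hi ⊢
      rw [h2, h3, mul_one]
      refine Finset.prod_congr rfl fun i hi => ?_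
      rw [mem_Yset] at hi
      refine if_neg ?_
      rcases hi with h | h <;> simp [h]
  rw [main]

def allowed : Step → Finset RT
  | Step.U => {RT.UU}
  | Step.D => {RT.DD}
  | Step.H => {RT.HO, RT.HI, RT.FF}

end Count

/-- For every Motzkin path `p` of length `n`, the number of permutations
`w` of `{1,…,n}` with `φ(w) = p` equals the weight `wt(p)`. -/
theorem card_phi_preimage_eq_wt (n : ℕ) (p : Fin n → Step) (hp : IsMotzkin p) :
    (Finset.univ.filter (fun w : Equiv.Perm (Fin n) => phi w = p)).card = wt p := by
  have key : ∀ w ∈ (univ.filter fun w : Equiv.Perm (Fin n) => phi w = p),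
      refType w ∈ Fintype.piFinset (fun i => allowed (p i)) := by
    intro w hw
    rw [Finset.mem_filter] at hw
    rw [Fintype.mem_piFinset]
    intro i
    rw [← hw.2, phi_eq_rt]
    beta_reduce
    rcases h : refType w i <;> simp [rtToStep, allowed]
  rw [Finset.card_eq_sum_card_fiberwise key]
  have fibers : ∀ τ ∈ Fintype.piFinset (fun i => allowed (p i)),
      ((univ.filter fun w : Equiv.Perm (Fin n) => phi w = p).filter
        (fun w => refType w = τ)).card
        = ∏ i : Fin n, (if τ i = RT.FF then 1 else heightAt p i) := by
    intro τ hτ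
    have hc : ∀ i, rtToStep (τ i) = p i := by
      intro i
      have hmem := Fintype.mem_piFinset.mp hτ i
      rcases hpi : p i <;> rw [hpi] at hmem <;>
        simp only [allowed, Finset.mem_singleton, Finset.mem_insert] at hmem
      · rw [hmem]; rfl
      · rw [hmem]; rfl
      · rcases hmem with h | h | h <;> rw [h] <;> rfl
    have hset : (univ.filter fun w : Equiv.Perm (Fin n) => phi w = p).filter
        (fun w => refType w = τ) = univ.filter fun w => refType w = τ := by
      rw [Finset.filter_filter]
      apply Finset.filter_congr
      intro w _
      constructor
      · exact And.right
      · intro h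
        refine ⟨?_, h⟩
        rw [phi_eq_rt, h]
        funext i
        exact hc i
    rw [hset]
    exact fiber_card p τ hp hc
  rw [Finset.sum_congr rfl fibers,
    ← Finset.prod_univ_sum (fun i => allowed (p i)) (fun i r => if r = RT.FF then 1 else heightAt p i)]
  rw [wt]
  apply Finset.prod_congr rfl
  intro i _
  rcases hpi : p i <;> simp [allowed, hpi] <;> omega
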